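/- arXiv:1201.0325 — 5 statements merged into one kernel-verified Lean document; each statement's English description precedes it below -/
import Mathlib

section
/- Let A be a C*-subalgebra of B(H) and let P ∈ A be a projection that commutes with every element of A and whose range is a proper subspace of H. Let E = AP = {aP : a ∈ A}, regarded as a right A-module under operator multiplication, with ρ(z) = (z*z)^{1/2} for z ∈ E. Then E is a Finsler A-module, and the inclusion map Φ : E → B(H) satisfies Φ(z)*Φ(z) = φ(ρ(z)²) and Φ(z·b) = Φ(z)φ(b) for all z ∈ E, b ∈ A, where φ : A → B(H) is the inclusion representation; yet the closed linear span of {Φ(z)h : z ∈ E, h ∈ H} is contained in the range of P and hence is not equal to H, so Φ is not a nondegenerate quasi-representation. -/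
set_option synthInstance.maxHeartbeats 1000000
set_option maxHeartbeats 1000000

open ContinuousLinearMap

/-- Any continuous functional calculus (over ℂ) of a normal element lies in the
elemental star algebra it generates. -/
lemma cfc_complex_mem_elemental {B : Type*} [CStarAlgebra B] (b : B) (hb : IsStarNormal b)
    (f : ℂ → ℂ) : cfc f b ∈ StarAlgebra.elemental ℂ b := by
  by_cases hf : ContinuousOn f (spectrum ℂ b)
  · rw [cfc_apply f b hb hf, cfcHom_eq_of_isStarNormal]
    exact SetLike.coe_mem _
  · rw [cfc_apply_of_not_continuousOn b hf]
    exact zero_mem _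

/-- `CFC.sqrt` of a nonnegative element of a closed star subalgebra stays in it. -/
lemma sqrt_mem_of_mem {H : Type} [NormedAddCommGroup H] [InnerProductSpace ℂ H]
    [CompleteSpace H] (A : StarSubalgebra ℂ (H →L[ℂ] H))
    (hA : IsClosed (A : Set (H →L[ℂ] H))) (b : H →L[ℂ] H) (hb : 0 ≤ b) (hbA : b ∈ A) :
    CFC.sqrt b ∈ A := by
  have hsa : IsSelfAdjoint b := .of_nonneg hb
  have h1 : CFC.sqrt b = cfc NNReal.sqrt b := CFC.sqrt_eq_cfc
  rw [h1, cfc_nnreal_eq_real _ b hb, cfc_real_eq_complex _ hsa]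
  exact StarAlgebra.elemental.le_of_mem hA hbA
    (cfc_complex_mem_elemental b hsa.isStarNormal _)

/-- **Remark 4.3 (fullness cannot be dropped).** Let `A ⊆ B(H)` be a closed *-subalgebra and
`P ∈ A` a projection commuting with every element of `A`, whose range is a proper subspace
of `H`. Then `E = A P = {aP : a ∈ A}` with `ρ(z) = (z*z)^{1/2}` is a Finsler `A`-module
(closed under the right action, norm-closed, `ρ` takes values in the positive cone of `A`,
`‖ρ(z)‖ = ‖z‖`, and `ρ(zb)² = b* ρ(z)² b`), and the inclusion `Φ = id : E → B(H)` is a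
quasi-representation over the inclusion `φ : A → B(H)` (`Φ(z)*Φ(z) = φ(ρ(z)²)`, and
`Φ(zb) = Φ(z)φ(b)` trivially); yet the closed span of `{Φ(z)h : z ∈ E, h ∈ H}` lies in the
range of `P`, hence is not `H`, so `Φ` is degenerate. -/
theorem finsler_module_quasi_rep_not_nondegenerate
    {H : Type} [NormedAddCommGroup H] [InnerProductSpace ℂ H] [CompleteSpace H]
    (A : StarSubalgebra ℂ (H →L[ℂ] H)) (hA : IsClosed (A : Set (H →L[ℂ] H)))
    (P : H →L[ℂ] H) (hPA : P ∈ A) (hPidem : P * P = P) (hPsa : star P = P)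
    (hPcomm : ∀ a ∈ A, a * P = P * a)
    (hPrange : LinearMap.range (P : H →ₗ[ℂ] H) ≠ ⊤) :
    ∀ (E : Set (H →L[ℂ] H)), E = {z | ∃ a ∈ A, z = a * P} →
    ∀ (ρ : (H →L[ℂ] H) → (H →L[ℂ] H)), ρ = (fun z => CFC.sqrt (star z * z)) →
      (∀ z ∈ E, ∀ b ∈ A, z * b ∈ E) ∧
      IsClosed E ∧
      (∀ z ∈ E, ρ z ∈ A ∧ 0 ≤ ρ z) ∧
      (∀ z : H →L[ℂ] H, ‖ρ z‖ = ‖z‖) ∧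
      (∀ z ∈ E, ∀ b ∈ A, ρ (z * b) ^ 2 = star b * ρ z ^ 2 * b) ∧
      (∀ z ∈ E, star z * z = ρ z ^ 2) ∧
      (Submodule.span ℂ {v : H | ∃ z ∈ E, ∃ h : H, z h = v}).topologicalClosure
        ≤ LinearMap.range (P : H →ₗ[ℂ] H) ∧
      (Submodule.span ℂ {v : H | ∃ z ∈ E, ∃ h : H, z h = v}).topologicalClosure ≠ ⊤ := by
  intro E hE ρ hρ
  -- basic membership facts
  have hEA : ∀ z ∈ E, z ∈ A := by
    rintro z hz
    rw [hE] at hz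
    obtain ⟨a, haA, rfl⟩ := hz
    exact mul_mem haA hPA
  have hEfix : ∀ z ∈ E, z * P = z := by
    rintro z hz
    rw [hE] at hz
    obtain ⟨a, haA, rfl⟩ := hz
    rw [mul_assoc, hPidem]
  have hEchar : E = {z | z ∈ A ∧ z * P = z} := by
    ext z
    constructor
    · exact fun hz => ⟨hEA z hz, hEfix z hz⟩
    · rintro ⟨hzA, hzP⟩
      rw [hE]
      exact ⟨z, hzA, hzP.symm⟩
  have hsq : ∀ z : H →L[ℂ] H, ρ z ^ 2 = star z * z := by
    intro z
    rw [hρ]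
    exact CFC.sq_sqrt _ (star_mul_self_nonneg z)
  have hρnonneg : ∀ z : H →L[ℂ] H, 0 ≤ ρ z := by
    intro z; rw [hρ]; exact CFC.sqrt_nonneg _
  have hclosed : IsClosed (LinearMap.range (P : H →ₗ[ℂ] H) : Set H) := by
    have hk : (LinearMap.range (P : H →ₗ[ℂ] H) : Submodule ℂ H) =
        (ContinuousLinearMap.id ℂ H - P).ker := by
      ext x
      constructor
      · rintro ⟨y, rfl⟩
        have := congrFun (congrArg DFunLike.coe hPidem) y
        simp only [ContinuousLinearMap.mul_apply] at this
        simp [LinearMap.mem_ker, this]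
      · intro hx
        have h0 : (ContinuousLinearMap.id ℂ H - P) x = 0 := hx
        simp only [ContinuousLinearMap.sub_apply, ContinuousLinearMap.id_apply,
          sub_eq_zero] at h0
        exact ⟨x, h0.symm⟩
    rw [hk]
    exact isClosed_ker _
  have span_le_range :
      (Submodule.span ℂ {v : H | ∃ z ∈ E, ∃ h : H, z h = v}).topologicalClosure
        ≤ LinearMap.range (P : H →ₗ[ℂ] H) := by
    refine Submodule.topologicalClosure_minimal _ ?_ hclosed
    rw [Submodule.span_le]
    rintro v ⟨z, hz, h, rfl⟩
    rw [hE] at hz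
    obtain ⟨a, haA, rfl⟩ := hz
    have hv : (a * P) h = P (a h) := by
      rw [hPcomm a haA]
      simp [ContinuousLinearMap.mul_apply]
    rw [SetLike.mem_coe, hv]
    exact ⟨a h, rfl⟩
  refine ⟨?_, ?_, ?_, ?_, ?_, ?_, ?_, ?_⟩
  · -- closed under the right action
    rintro z hz b hbA
    rw [hE] at hz ⊢
    obtain ⟨a, haA, rfl⟩ := hz
    exact ⟨a * b, mul_mem haA hbA,
      by rw [mul_assoc a P b, ← hPcomm b hbA, ← mul_assoc]⟩
  · -- E is closed
    rw [hEchar]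
    have h1 : IsClosed {z : H →L[ℂ] H | z * P = z} := by
      have : {z : H →L[ℂ] H | z * P = z} = {z | z * P - z = 0} := by
        ext z; simp [sub_eq_zero]
      rw [this]
      exact isClosed_singleton.preimage (by fun_prop)
    exact IsClosed.inter hA h1
  · -- ρ z ∈ A and 0 ≤ ρ z
    intro z hz
    refine ⟨?_, hρnonneg z⟩
    rw [hρ]
    exact sqrt_mem_of_mem A hA _ (star_mul_self_nonneg z)
      (mul_mem (star_mem (hEA z hz)) (hEA z hz))
  · -- ‖ρ z‖ = ‖z‖
    intro z
    have hsa : IsSelfAdjoint (ρ z) := .of_nonneg (hρnonneg z)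
    have key : ‖ρ z‖ * ‖ρ z‖ = ‖z‖ * ‖z‖ := by
      calc ‖ρ z‖ * ‖ρ z‖ = ‖star (ρ z) * ρ z‖ := (CStarRing.norm_star_mul_self).symm
        _ = ‖ρ z ^ 2‖ := by rw [hsa.star_eq, sq]
        _ = ‖star z * z‖ := by rw [hsq]
        _ = ‖z‖ * ‖z‖ := CStarRing.norm_star_mul_self
    nlinarith [norm_nonneg (ρ z), norm_nonneg z]
  · -- ρ(zb)² = b* ρ(z)² b
    intro z _ b _
    rw [hsq, hsq, star_mul]
    simp only [mul_assoc]
  · -- star z * z = ρ z ^ 2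
    intro z _
    exact (hsq z).symm
  · -- the closed span is contained in the range of P
    exact span_le_range
  · -- hence not all of H
    intro htop
    exact hPrange (top_le_iff.mp (htop ▸ span_le_range))
end

section
/- Let E be a Finsler A-module with associated map ρ : E → A⁺, let φ : A → B(H) be a representation, and let Φ : E → B(H,K) be a quasi-representation satisfying in addition Φ(x)*Φ(y) = 0 whenever x ≠ y (as holds for the quasi-representation constructed in the paper's Theorem 2.3). If Φ is irreducible, then φ is an irreducible representation. -/
open MulOpposite ContinuousLinearMap

/-- **Theorem 4.6, first part.** Let `Φ : E → B(H,K)` be a quasi-representation of a Finsler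
`A`-module satisfying in addition `Φ(x)* Φ(y) = 0` for `x ≠ y` (as for the
quasi-representation of Theorem 2.3). If `Φ` is irreducible (the only pairs of closed
subspaces `(M,N)` with `Φ(E)M ⊆ N` and `Φ(E)*N ⊆ M` are `(0,0)` and `(H,K)`),
then `φ` is an irreducible representation. -/
theorem irreducible_quasi_rep_gives_irreducible_rep
    {A : Type} [CStarAlgebra A] [PartialOrder A] [StarOrderedRing A]
    {E : Type} [NormedAddCommGroup E] [NormedSpace ℂ E] [CompleteSpace E] [Module Aᵐᵒᵖ E]
    {H : Type} [NormedAddCommGroup H] [InnerProductSpace ℂ H] [CompleteSpace H]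
    {K : Type} [NormedAddCommGroup K] [InnerProductSpace ℂ K] [CompleteSpace K]
    (ρ : E → A)
    (hρ_pos : ∀ x : E, 0 ≤ ρ x)
    (hρ_norm : ∀ x : E, ‖ρ x‖ = ‖x‖)
    (hρ_smul : ∀ (x : E) (a : A), ρ (op a • x) ^ 2 = star a * ρ x ^ 2 * a)
    (φ : A →⋆ₐ[ℂ] (H →L[ℂ] H)) (Φ : E → (H →L[ℂ] K))
    (hΦ : ∀ x : E, (adjoint (Φ x)).comp (Φ x) = φ (ρ x ^ 2))
    (hΦorth : ∀ x y : E, x ≠ y → (adjoint (Φ x)).comp (Φ y) = 0)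
    (hΦirr : ∀ (M : Submodule ℂ H) (N : Submodule ℂ K),
      IsClosed (M : Set H) → IsClosed (N : Set K) →
      (∀ (x : E), ∀ h ∈ M, Φ x h ∈ N) → (∀ (x : E), ∀ k ∈ N, adjoint (Φ x) k ∈ M) →
      (M = ⊥ ∧ N = ⊥) ∨ (M = ⊤ ∧ N = ⊤)) :
    ∀ M : Submodule ℂ H, IsClosed (M : Set H) →
      (∀ (a : A), ∀ h ∈ M, φ a h ∈ M) → M = ⊥ ∨ M = ⊤ := by
  intro M hM hMinv
  set N₀ : Submodule ℂ K := ⨆ x : E, M.map (Φ x : H →ₗ[ℂ] K) with hN₀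
  set N := N₀.topologicalClosure with hN
  have hNc : IsClosed (N : Set K) := N₀.isClosed_topologicalClosure
  have h1 : ∀ x : E, ∀ h ∈ M, Φ x h ∈ N := by
    intro x h hh
    exact N₀.le_topologicalClosure
      (le_iSup (fun x => M.map (Φ x : H →ₗ[ℂ] K)) x (Submodule.mem_map_of_mem hh))
  have h2 : ∀ x : E, ∀ k ∈ N, adjoint (Φ x) k ∈ M := by
    intro x k hk
    have hcomap : IsClosed ((M.comap (adjoint (Φ x) : K →ₗ[ℂ] H) : Submodule ℂ K) : Set K) :=
      hM.preimage (adjoint (Φ x)).continuous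
    have hle : N₀ ≤ M.comap (adjoint (Φ x) : K →ₗ[ℂ] H) := by
      refine iSup_le fun y => ?_
      rintro _ ⟨h, hh, rfl⟩
      simp only [Submodule.mem_comap, ContinuousLinearMap.coe_coe]
      by_cases hxy : x = y
      · subst hxy
        have hc : adjoint (Φ x) (Φ x h) = φ (ρ x ^ 2) h :=
          congrArg (fun f => f h) (hΦ x)
        rw [hc]
        exact hMinv _ h hh
      · have hc : adjoint (Φ x) (Φ y h) = 0 :=
          congrArg (fun f => f h) (hΦorth x y hxy)
        rw [hc]
        exact M.zero_mem
    exact N₀.topologicalClosure_minimal hle hcomap hk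
  rcases hΦirr M N hM hNc h1 h2 with ⟨h, _⟩ | ⟨h, _⟩
  · exact Or.inl h
  · exact Or.inr h
end

section
/- Let E be a full Finsler A-module with associated map ρ : E → A⁺, let φ : A → B(H) be a representation, and let Φ : E → B(H,K) be a quasi-representation satisfying Φ(x·a) = Φ(x)φ(a) for all x ∈ E, a ∈ A, and such that the closed linear span of {Φ(x)h : x ∈ E, h ∈ H} equals K. If φ is irreducible, then Φ is irreducible. -/
open MulOpposite ContinuousLinearMap

/-- **Theorem 4.6, second part.** Let `E` be a full Finsler `A`-module, `Φ : E → B(H,K)` a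
quasi-representation with `Φ(x·a) = Φ(x)φ(a)` whose range has dense span in `K`
(as for the quasi-representation of Theorem 2.3). If `φ` is irreducible then `Φ` is
irreducible. -/
theorem irreducible_rep_gives_irreducible_quasi_rep
    {A : Type} [CStarAlgebra A] [PartialOrder A] [StarOrderedRing A]
    {E : Type} [NormedAddCommGroup E] [NormedSpace ℂ E] [CompleteSpace E] [Module Aᵐᵒᵖ E]
    {H : Type} [NormedAddCommGroup H] [InnerProductSpace ℂ H] [CompleteSpace H]
    {K : Type} [NormedAddCommGroup K] [InnerProductSpace ℂ K] [CompleteSpace K]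
    (ρ : E → A)
    (hρ_pos : ∀ x : E, 0 ≤ ρ x)
    (hρ_norm : ∀ x : E, ‖ρ x‖ = ‖x‖)
    (hρ_smul : ∀ (x : E) (a : A), ρ (op a • x) ^ 2 = star a * ρ x ^ 2 * a)
    (φ : A →⋆ₐ[ℂ] (H →L[ℂ] H)) (Φ : E → (H →L[ℂ] K))
    (hΦ : ∀ x : E, (adjoint (Φ x)).comp (Φ x) = φ (ρ x ^ 2))
    (hΦmod : ∀ (x : E) (a : A), Φ (op a • x) = (Φ x).comp (φ a))
    (hfull : (Submodule.span ℂ {a : A | ∃ x : E, a = ρ x ^ 2}).topologicalClosure = ⊤)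
    (hspan : (Submodule.span ℂ {k : K | ∃ (x : E) (h : H), Φ x h = k}).topologicalClosure = ⊤)
    (hφirr : ∀ M : Submodule ℂ H, IsClosed (M : Set H) →
      (∀ (a : A), ∀ h ∈ M, φ a h ∈ M) → M = ⊥ ∨ M = ⊤) :
    ∀ (M : Submodule ℂ H) (N : Submodule ℂ K),
      IsClosed (M : Set H) → IsClosed (N : Set K) →
      (∀ (x : E), ∀ h ∈ M, Φ x h ∈ N) → (∀ (x : E), ∀ k ∈ N, adjoint (Φ x) k ∈ M) →
      (M = ⊥ ∧ N = ⊥) ∨ (M = ⊤ ∧ N = ⊤) := by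
  intro M N hMcl hNcl hMN hNM
  -- M is invariant under every φ a
  have hcontφ : Continuous φ :=
    AddMonoidHomClass.continuous_of_bound φ 1 (by
      simpa only [one_mul] using fun a => NonUnitalStarAlgHom.norm_apply_le φ a)
  have hMinv : ∀ (a : A), ∀ h ∈ M, φ a h ∈ M := by
    let T : Submodule ℂ A :=
      { carrier := {a : A | ∀ h ∈ M, φ a h ∈ M}
        add_mem' := by
          intro a b ha hb h hh
          simpa [map_add] using M.add_mem (ha h hh) (hb h hh)
        zero_mem' := by intro h hh; simpa using M.zero_mem
        smul_mem' := by
          intro c a ha h hh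
          simpa [map_smul] using M.smul_mem c (ha h hh) }
    have hTclosed : IsClosed (T : Set A) := by
      have : (T : Set A) = ⋂ h ∈ M, (fun a : A => φ a h) ⁻¹' (M : Set H) := by
        ext a; simp [T, Set.mem_iInter]
      rw [this]
      refine isClosed_biInter fun h hh => IsClosed.preimage ?_ hMcl
      exact (ContinuousLinearMap.apply ℂ H h).continuous.comp hcontφ
    have hsub : Submodule.span ℂ {a : A | ∃ x : E, a = ρ x ^ 2} ≤ T := by
      rw [Submodule.span_le]
      rintro a ⟨x, rfl⟩ h hh
      have := congrArg (fun f : H →L[ℂ] H => f h) (hΦ x)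
      simp only [ContinuousLinearMap.comp_apply] at this
      rw [← this]
      exact hNM x _ (hMN x h hh)
    have : (⊤ : Submodule ℂ A) ≤ T := by
      rw [← hfull]
      exact Submodule.topologicalClosure_minimal _ hsub hTclosed
    exact fun a => this (Submodule.mem_top)
  rcases hφirr M hMcl hMinv with hM | hM
  · left
    refine ⟨hM, ?_⟩
    -- every adjoint (Φ x) k = 0 for k ∈ N, hence k ⟂ dense span
    rw [Submodule.eq_bot_iff]
    intro k hk
    have hmem : k ∈ (Submodule.span ℂ {k : K | ∃ (x : E) (h : H), Φ x h = k})ᗮ := by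
      rw [Submodule.mem_orthogonal]
      intro u hu
      induction hu using Submodule.span_induction with
      | mem u hu =>
        obtain ⟨x, h, rfl⟩ := hu
        have h0 : adjoint (Φ x) k = 0 := by
          have := hNM x k hk
          rw [hM, Submodule.mem_bot] at this
          exact this
        calc (inner ℂ (Φ x h) k : ℂ) = inner ℂ h (adjoint (Φ x) k) := by
              rw [ContinuousLinearMap.adjoint_inner_right]
          _ = 0 := by rw [h0]; simp
      | zero => simp
      | add u v _ _ hu hv => simp [inner_add_left, hu, hv]
      | smul c u _ hu => simp [inner_smul_left, hu]
    rw [Submodule.topologicalClosure_eq_top_iff.mp hspan] at hmem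
    simpa using hmem
  · right
    refine ⟨hM, ?_⟩
    have hsub : Submodule.span ℂ {k : K | ∃ (x : E) (h : H), Φ x h = k} ≤ N := by
      rw [Submodule.span_le]
      rintro k ⟨x, h, rfl⟩
      exact hMN x h (by rw [hM]; trivial)
    have := Submodule.topologicalClosure_minimal _ hsub hNcl
    rw [hspan] at this
    exact le_antisymm le_top this
end

section
/- Let E be a full Finsler A-module with associated map ρ : E → A⁺, let φ : A → B(H) be an irreducible representation, and let Φ : E → B(H,K) be a quasi-representation satisfying Φ(x·a) = Φ(x)φ(a) for all x ∈ E, a ∈ A, and such that the closed linear span of {Φ(x)h : x ∈ E, h ∈ H} equals K. Then Φ is nondegenerate (i.e., in addition the closed linear span of {Φ(x)*k : x ∈ E, k ∈ K} equals H) and Φ is irreducible. -/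
open MulOpposite ContinuousLinearMap

section Helper

variable {A : Type} [CStarAlgebra A]
    {E : Type}
    {H : Type} [NormedAddCommGroup H] [InnerProductSpace ℂ H] [CompleteSpace H]

/-- If the span of the `ρ x ^ 2` is dense in `A` and `φ (ρ x ^ 2) h ∈ M` for all `x`,
with `M` closed, then `φ a h ∈ M` for all `a`. -/
theorem my_full_helper (ρ : E → A) (φ : A →⋆ₐ[ℂ] (H →L[ℂ] H))
    (hfull : (Submodule.span ℂ {a : A | ∃ x : E, a = ρ x ^ 2}).topologicalClosure = ⊤)
    (M : Submodule ℂ H) (hM : IsClosed (M : Set H)) (h : H)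
    (hgen : ∀ x : E, φ (ρ x ^ 2) h ∈ M) : ∀ a : A, φ a h ∈ M := by
  have hφc : Continuous φ :=
    AddMonoidHomClass.continuous_of_bound φ 1
      (by simpa only [one_mul] using fun a => NonUnitalStarAlgHom.norm_apply_le φ a)
  have hc : Continuous fun a : A => φ a h :=
    (ContinuousLinearMap.apply ℂ H h |>.continuous).comp hφc
  let L : A →ₗ[ℂ] H :=
    { toFun := fun a => φ a h
      map_add' := fun a b => by simp [map_add]
      map_smul' := fun c a => by simp [map_smul] }
  have hle : Submodule.span ℂ {a : A | ∃ x : E, a = ρ x ^ 2} ≤ M.comap L := by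
    rw [Submodule.span_le]
    rintro a ⟨x, rfl⟩
    exact hgen x
  have h2 : (⊤ : Submodule ℂ A) ≤ M.comap L := by
    rw [← hfull]
    exact Submodule.topologicalClosure_minimal _ hle (hM.preimage hc)
  exact fun a => h2 (Submodule.mem_top (x := a))

theorem my_mem_of_full (ρ : E → A) (φ : A →⋆ₐ[ℂ] (H →L[ℂ] H))
    (hfull : (Submodule.span ℂ {a : A | ∃ x : E, a = ρ x ^ 2}).topologicalClosure = ⊤)
    (M : Submodule ℂ H) (hM : IsClosed (M : Set H)) (h : H)
    (hgen : ∀ x : E, φ (ρ x ^ 2) h ∈ M) : h ∈ M := by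
  have := my_full_helper ρ φ hfull M hM h hgen 1
  simpa using this

end Helper

/-- **Corollary 4.8.** Let `E` be a full Finsler `A`-module, `φ : A → B(H)` an irreducible
representation and `Φ : E → B(H,K)` a quasi-representation with `Φ(x·a) = Φ(x)φ(a)` whose
range has dense span in `K`. Then `Φ` is nondegenerate and irreducible. -/
theorem full_and_irreducible_rep_gives_nondegenerate_irreducible_quasi_rep
    {A : Type} [CStarAlgebra A] [PartialOrder A] [StarOrderedRing A]
    {E : Type} [NormedAddCommGroup E] [NormedSpace ℂ E] [CompleteSpace E] [Module Aᵐᵒᵖ E]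
    {H : Type} [NormedAddCommGroup H] [InnerProductSpace ℂ H] [CompleteSpace H]
    {K : Type} [NormedAddCommGroup K] [InnerProductSpace ℂ K] [CompleteSpace K]
    (ρ : E → A)
    (hρ_pos : ∀ x : E, 0 ≤ ρ x)
    (hρ_norm : ∀ x : E, ‖ρ x‖ = ‖x‖)
    (hρ_smul : ∀ (x : E) (a : A), ρ (op a • x) ^ 2 = star a * ρ x ^ 2 * a)
    (φ : A →⋆ₐ[ℂ] (H →L[ℂ] H)) (Φ : E → (H →L[ℂ] K))
    (hΦ : ∀ x : E, (adjoint (Φ x)).comp (Φ x) = φ (ρ x ^ 2))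
    (hΦmod : ∀ (x : E) (a : A), Φ (op a • x) = (Φ x).comp (φ a))
    (hfull : (Submodule.span ℂ {a : A | ∃ x : E, a = ρ x ^ 2}).topologicalClosure = ⊤)
    (hspan : (Submodule.span ℂ {k : K | ∃ (x : E) (h : H), Φ x h = k}).topologicalClosure = ⊤)
    (hφirr : ∀ M : Submodule ℂ H, IsClosed (M : Set H) →
      (∀ (a : A), ∀ h ∈ M, φ a h ∈ M) → M = ⊥ ∨ M = ⊤) :
    (Submodule.span ℂ
      {h : H | ∃ (x : E) (k : K), adjoint (Φ x) k = h}).topologicalClosure = ⊤ ∧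
    (∀ (M : Submodule ℂ H) (N : Submodule ℂ K),
      IsClosed (M : Set H) → IsClosed (N : Set K) →
      (∀ (x : E), ∀ h ∈ M, Φ x h ∈ N) → (∀ (x : E), ∀ k ∈ N, adjoint (Φ x) k ∈ M) →
      (M = ⊥ ∧ N = ⊥) ∨ (M = ⊤ ∧ N = ⊤)) := by
  have hΦ' : ∀ (x : E) (h : H), adjoint (Φ x) (Φ x h) = φ (ρ x ^ 2) h := by
    intro x h
    have := congrArg (fun T => T h) (hΦ x)
    simpa using this
  constructor
  · rw [Submodule.eq_top_iff']
    intro h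
    refine my_mem_of_full ρ φ hfull _ (Submodule.isClosed_topologicalClosure _) h ?_
    intro x
    rw [← hΦ' x h]
    exact Submodule.le_topologicalClosure _ (Submodule.subset_span ⟨x, Φ x h, rfl⟩)
  · intro M N hMc hNc hMN hNM
    have hMinv : ∀ (a : A), ∀ h ∈ M, φ a h ∈ M := by
      intro a h hh
      refine my_full_helper ρ φ hfull M hMc h (fun x => ?_) a
      rw [← hΦ' x h]
      exact hNM x _ (hMN x h hh)
    rcases hφirr M hMc hMinv with hM | hM
    · left
      refine ⟨hM, ?_⟩
      rw [eq_bot_iff]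
      intro k hk
      have hkz : ∀ x : E, adjoint (Φ x) k = 0 := by
        intro x
        have := hNM x k hk
        rw [hM] at this
        simpa using this
      have hkU : (Submodule.span ℂ {k : K | ∃ (x : E) (h : H), Φ x h = k}).topologicalClosure
          ≤ (Submodule.span ℂ ({k} : Set K))ᗮ := by
        refine Submodule.topologicalClosure_minimal _ ?_ (Submodule.isClosed_orthogonal _)
        rw [Submodule.span_le]
        rintro w ⟨x, h, rfl⟩
        refine (Submodule.mem_orthogonal' _ _).mpr fun u hu => ?_
        induction hu using Submodule.span_induction with
        | mem u hu =>
          rw [Set.mem_singleton_iff] at hu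
          subst hu
          rw [← adjoint_inner_right, hkz x, inner_zero_right]
        | zero => simp
        | add u v _ _ hu hv => rw [inner_add_right, hu, hv, add_zero]
        | smul c u _ hu => rw [inner_smul_right, hu, mul_zero]
      rw [hspan, top_le_iff] at hkU
      have hk0 : k ∈ (Submodule.span ℂ ({k} : Set K))ᗮ := hkU ▸ Submodule.mem_top
      have : (inner ℂ k k : ℂ) = 0 :=
        (Submodule.mem_orthogonal _ k).mp hk0 k (Submodule.subset_span rfl)
      simpa using inner_self_eq_zero.mp this
    · right
      refine ⟨hM, ?_⟩
      rw [eq_top_iff, ← hspan]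
      refine Submodule.topologicalClosure_minimal _ ?_ hNc
      rw [Submodule.span_le]
      rintro w ⟨x, h, rfl⟩
      exact hMN x h (hM ▸ Submodule.mem_top)
end

section
/- Let E be a Hilbert C*-module over a C*-algebra A and F a Hilbert C*-module over a C*-algebra B, let φ : A → B be a *-homomorphism, and let Φ : E → F be a linear map satisfying ⟨Φ(x), Φ(x)⟩ = φ(⟨x, x⟩) for all x ∈ E. Then Φ(x·a) = Φ(x)·φ(a) for all x ∈ E and a ∈ A. -/
open MulOpposite

/-- The class `CStarModule` as it stood in Mathlib (December 2024): a Hilbert C*-module over `A`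
as a *right* module, i.e. with an action of `Aᵐᵒᵖ`. -/
class CStarModuleRight (A : outParam <| Type*) (E : Type*) [NonUnitalSemiring A] [StarRing A]
    [Module ℂ A] [AddCommGroup E] [Module ℂ E] [PartialOrder A] [SMul Aᵐᵒᵖ E] [Norm A] [Norm E]
    extends Inner A E where
  inner_add_right {x} {y} {z} : inner x (y + z) = inner x y + inner x z
  inner_self_nonneg {x} : 0 ≤ inner x x
  inner_self {x} : inner x x = 0 ↔ x = 0
  inner_op_smul_right {a : A} {x y : E} : inner x (op a • y) = inner x y * a
  inner_smul_right_complex {z : ℂ} {x} {y} : inner x (z • y) = z • inner x y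
  star_inner x y : star (inner x y) = inner y x
  norm_eq_sqrt_norm_inner_self x : ‖x‖ = √‖inner x x‖

namespace CStarModuleRight

variable {A : Type} [CStarAlgebra A] [PartialOrder A] [StarOrderedRing A]
  {E : Type} [NormedAddCommGroup E] [Module ℂ E] [Module Aᵐᵒᵖ E] [CStarModuleRight A E]

lemma inner_add_left {x y z : E} : inner A (x + y) z = inner A x z + inner A y z := by
  rw [← star_inner z, inner_add_right, star_add, star_inner, star_inner]

lemma inner_smul_left_complex {c : ℂ} {x y : E} : inner A (c • x) y = star c • inner A x y := by
  rw [← star_inner y, inner_smul_right_complex, star_smul, star_inner]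

lemma inner_neg_right {x y : E} : inner A x (-y) = -inner A x y := by
  have h := inner_smul_right_complex (A := A) (z := (-1 : ℂ)) (x := x) (y := y)
  rwa [neg_one_smul, neg_one_smul] at h

lemma inner_neg_left {x y : E} : inner A (-x) y = -inner A x y := by
  rw [← star_inner y, inner_neg_right, star_neg, star_inner]

lemma inner_sub_right {x y z : E} : inner A x (y - z) = inner A x y - inner A x z := by
  rw [sub_eq_add_neg, inner_add_right, inner_neg_right, ← sub_eq_add_neg]

lemma inner_sub_left {x y z : E} : inner A (x - y) z = inner A x z - inner A y z := by
  rw [sub_eq_add_neg, inner_add_left, inner_neg_left, ← sub_eq_add_neg]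

lemma inner_op_smul_left {a : A} {x y : E} : inner A (op a • x) y = star a * inner A x y := by
  rw [← star_inner y, inner_op_smul_right, star_mul, star_inner]

end CStarModuleRight

/-- **(Definition 2.1, claim for Hilbert C*-modules.)** If `E`, `F` are Hilbert C*-modules over
C*-algebras `A`, `B`, `φ : A → B` is a *-homomorphism and `Φ : E → F` is a linear map with
`⟪Φ x, Φ x⟫ = φ ⟪x, x⟫` for all `x`, then `Φ(x·a) = Φ(x)·φ(a)` for all `x ∈ E`, `a ∈ A`. -/
theorem hilbert_module_phi_morphism_is_module_map
    {A : Type} [CStarAlgebra A] [PartialOrder A] [StarOrderedRing A]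
    {B : Type} [CStarAlgebra B] [PartialOrder B] [StarOrderedRing B]
    {E : Type} [NormedAddCommGroup E] [Module ℂ E] [Module Aᵐᵒᵖ E]
    [CStarModuleRight A E] [CompleteSpace E]
    {F : Type} [NormedAddCommGroup F] [Module ℂ F] [Module Bᵐᵒᵖ F]
    [CStarModuleRight B F] [CompleteSpace F]
    (φ : A →⋆ₐ[ℂ] B) (Φ : E →ₗ[ℂ] F)
    (hΦ : ∀ x : E, (inner B (Φ x) (Φ x) : B) = φ (inner A x x : A)) :
    ∀ (x : E) (a : A), Φ (op a • x) = op (φ a) • Φ x := by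
  -- polarization: Φ preserves all inner products
  have key : ∀ x y : E, (inner B (Φ x) (Φ y) : B) = φ (inner A x y : A) := by
    intro x y
    set u : B := (inner B (Φ x) (Φ y) : B) - φ (inner A x y : A) with hu
    set v : B := (inner B (Φ y) (Φ x) : B) - φ (inner A y x : A) with hv
    have hx := hΦ x
    have hy := hΦ y
    have h1 : u + v = 0 := by
      have h := hΦ (x + y)
      simp only [map_add, CStarModuleRight.inner_add_left, CStarModuleRight.inner_add_right] at h
      rw [hu, hv]
      linear_combination (norm := abel_nf) h - hx - hy
    have h2 : Complex.I • u - Complex.I • v = 0 := by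
      have h := hΦ (x + Complex.I • y)
      simp only [map_add, map_smul, CStarModuleRight.inner_add_left, CStarModuleRight.inner_add_right,
        CStarModuleRight.inner_smul_left_complex, CStarModuleRight.inner_smul_right_complex,
        smul_add, smul_smul, smul_neg, neg_smul, map_neg, Complex.star_def, Complex.conj_I,
        neg_mul, Complex.I_mul_I, neg_neg, one_smul] at h
      rw [hu, hv, smul_sub, smul_sub]
      linear_combination (norm := module) h - hx - hy
    have huv : v = -u := eq_neg_of_add_eq_zero_right h1
    have h2u : (2 * Complex.I) • u = 0 := by
      rw [huv] at h2
      rw [two_mul, add_smul]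
      linear_combination (norm := module) h2
    have hu0 : u = 0 := by
      rcases smul_eq_zero.mp h2u with h | h
      · exact absurd h (by simp [Complex.ext_iff])
      · exact h
    have := sub_eq_zero.mp hu0
    exact this
  intro x a
  have hd : (inner B (Φ (op a • x) - op (φ a) • Φ x) (Φ (op a • x) - op (φ a) • Φ x) : B) = 0 := by
    simp only [CStarModuleRight.inner_sub_left, CStarModuleRight.inner_sub_right,
      CStarModuleRight.inner_op_smul_left, CStarModuleRight.inner_op_smul_right, key,
      ← map_star φ, ← map_mul φ, ← map_sub φ]
    rw [show (star a * inner A x x * a - star a * (inner A x x * a)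
        - (star a * inner A x x - star a * inner A x x) * a : A) = 0 by noncomm_ring, map_zero]
  have := CStarModuleRight.inner_self.mp hd
  exact sub_eq_zero.mp this
end
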